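/- The formal power series ∑_{n=1}^∞ λ(n) z^n ∈ ℤ[[z]] is not a rational function, i.e., there are no polynomials p, q ∈ ℤ[z] with q ≠ 0 such that q(z) · ∑ λ(n) z^n = p(z) as formal power series. -/

import Mathlib

open Polynomial Finset ArithmeticFunction
open scoped ArithmeticFunction.Omega

noncomputable def FF : ℕ → ℤ := fun n => if n = 0 then 0 else (-1 : ℤ) ^ (ArithmeticFunction.cardFactors n)

lemma FF_val {n : ℕ} (hn : 1 ≤ n) : FF n = 1 ∨ FF n = -1 := by
  unfold FF
  rw [if_neg (by omega)]
  rcases Nat.even_or_odd (ArithmeticFunction.cardFactors n) with h | h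
  · left; exact h.neg_one_pow
  · right; exact h.neg_one_pow

lemma reduce (f : PowerSeries ℤ) (hf : PowerSeries.constantCoeff f = 0) :
    ∀ (n : ℕ) (q : ℤ[X]), q.natDegree = n → q ≠ 0 →
      ∀ p : ℤ[X], (q : PowerSeries ℤ) * f = (p : PowerSeries ℤ) →
      ∃ q' p' : ℤ[X], q' ≠ 0 ∧ q'.coeff 0 ≠ 0 ∧ (q' : PowerSeries ℤ) * f = (p' : PowerSeries ℤ) := by
  intro n
  induction n using Nat.strong_induction_on with
  | _ n ih =>
    intro q hdeg hq p heq
    by_cases h0 : q.coeff 0 = 0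
    · -- q = X * q.divX
      have hqX : q = X * q.divX := by
        conv_lhs => rw [← X_mul_divX_add q]
        rw [h0, Polynomial.C_0, add_zero]
      have hp0 : p.coeff 0 = 0 := by
        have := congrArg (PowerSeries.constantCoeff) heq
        rw [map_mul, hf, mul_zero] at this
        have h2 : PowerSeries.constantCoeff (p : PowerSeries ℤ) = p.coeff 0 := by
          rw [← PowerSeries.coeff_zero_eq_constantCoeff_apply, Polynomial.coeff_coe]
        rw [h2] at this; omega
      have hpX : p = X * p.divX := by
        conv_lhs => rw [← X_mul_divX_add p]
        rw [hp0, Polynomial.C_0, add_zero]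
      have hdvx : q.divX ≠ 0 := by
        intro h
        rw [h, mul_zero] at hqX
        exact hq hqX
      have hdeg1 : 1 ≤ q.natDegree := by
        by_contra h
        push_neg at h
        interval_cases hh : q.natDegree
        · obtain ⟨a, ha⟩ := Polynomial.natDegree_eq_zero.mp hh
          rw [← ha] at h0
          simp at h0
          exact hq (by rw [← ha, h0, Polynomial.C_0])
      have heq2 : (q.divX : PowerSeries ℤ) * f = (p.divX : PowerSeries ℤ) := by
        apply mul_left_cancel₀ (PowerSeries.X_ne_zero (R := ℤ))
        rw [← mul_assoc, ← Polynomial.coe_X, ← Polynomial.coe_mul, ← hqX]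
        rw [heq]
        conv_lhs => rw [hpX]
        rw [Polynomial.coe_mul, Polynomial.coe_X]
      exact ih q.divX.natDegree (by
          rw [Polynomial.natDegree_divX_eq_natDegree_tsub_one]; omega) q.divX rfl hdvx p.divX heq2
    · exact ⟨q, p, hq, h0, heq⟩

lemma periodic_absurd (T m1 : ℕ) (hT : 0 < T) (_hm1 : 0 < m1)
    (hper : ∀ n, m1 ≤ n → FF (n + T) = FF n) : False := by
  have hconst : ∀ m, m1 ≤ m → FF (T * m) = FF (T * m1) := by
    intro m hm
    induction m, hm using Nat.le_induction with
    | base => rfl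
    | succ m hm ihm =>
      rw [mul_add, mul_one]
      rw [hper (T * m) (le_trans hm (Nat.le_mul_of_pos_left m hT)), ihm]
  obtain ⟨r, hr, hrp⟩ := Nat.exists_infinite_primes m1
  have h1 : FF (T * r) = FF (T * m1) := hconst r hr
  have h2 : FF (T * (r * r)) = FF (T * m1) := hconst (r * r) (le_trans hr (Nat.le_mul_of_pos_left r hrp.pos))
  have hT0 : T ≠ 0 := hT.ne'
  have hr0 : r ≠ 0 := hrp.pos.ne'
  have e1 : FF (T * r) = (-1 : ℤ) ^ (Ω T + 1) := by
    unfold FF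
    rw [if_neg (by positivity), cardFactors_mul hT0 hr0, cardFactors_apply_prime hrp]
  have e2 : FF (T * (r * r)) = (-1 : ℤ) ^ (Ω T + 2) := by
    unfold FF
    rw [if_neg (by positivity), cardFactors_mul hT0 (by positivity),
      cardFactors_mul hr0 hr0, cardFactors_apply_prime hrp]
  rw [e1] at h1; rw [e2] at h2
  rw [← h2, pow_add, pow_add] at h1
  have := mul_left_cancel₀ (a := ((-1 : ℤ) ^ Ω T)) (by positivity) h1
  norm_num at this

theorem stmt_11 :
    ¬ ∃ p q : Polynomial ℤ, q ≠ 0 ∧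
      (q : PowerSeries ℤ) * (PowerSeries.mk fun n =>
        if n = 0 then 0 else (-1 : ℤ) ^ (ArithmeticFunction.cardFactors n)) =
      (p : PowerSeries ℤ) := by
  rintro ⟨p, q, hq, heq⟩
  set f : PowerSeries ℤ := PowerSeries.mk fun n =>
    if n = 0 then 0 else (-1 : ℤ) ^ (ArithmeticFunction.cardFactors n) with hfdef
  have hcoef : ∀ n, PowerSeries.coeff n f = FF n := by
    intro n; rw [hfdef, PowerSeries.coeff_mk]; rfl
  have hf0 : PowerSeries.constantCoeff f = 0 := by
    rw [← PowerSeries.coeff_zero_eq_constantCoeff_apply, hcoef]; rfl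
  obtain ⟨q', p', hq', h0, heq'⟩ := reduce f hf0 q.natDegree q rfl hq p heq
  set d := q'.natDegree with hd
  set N := max (p'.natDegree + 1) (d + 1) with hN
  -- the recurrence
  have hrec : ∀ m, N ≤ m → ∑ i ∈ range (d + 1), q'.coeff i * FF (m - i) = 0 := by
    intro m hm
    have hmd : d + 1 ≤ m + 1 := by omega
    have h1 : PowerSeries.coeff m ((q' : PowerSeries ℤ) * f) = p'.coeff m := by
      rw [heq', Polynomial.coeff_coe]
    rw [Polynomial.coeff_eq_zero_of_natDegree_lt (by omega)] at h1
    rw [PowerSeries.coeff_mul, Finset.Nat.sum_antidiagonal_eq_sum_range_succ_mk] at h1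
    simp only [Polynomial.coeff_coe, hcoef] at h1
    rw [← h1]
    refine Finset.sum_subset (Finset.range_subset_range.mpr hmd) ?_
    intro i hi hni
    simp only [Finset.mem_range, not_lt] at hni
    rw [Polynomial.coeff_eq_zero_of_natDegree_lt (by omega), zero_mul]
  -- N ≥ 1
  have hNpos : 1 ≤ N := le_trans (by omega) (le_max_left _ _)
  -- determinism
  have hdet : ∀ m m', N ≤ m → N ≤ m' →
      (∀ i, 1 ≤ i → i ≤ d → FF (m' - i) = FF (m - i)) → FF m' = FF m := by
    intro m m' hm hm' hi
    have r1 := hrec m hm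
    have r2 := hrec m' hm'
    rw [Finset.sum_range_succ'] at r1 r2
    simp only [Nat.sub_zero] at r1 r2
    have hsum : ∑ i ∈ range d, q'.coeff (i + 1) * FF (m' - (i + 1)) =
        ∑ i ∈ range d, q'.coeff (i + 1) * FF (m - (i + 1)) := by
      refine Finset.sum_congr rfl fun i hii => ?_
      simp only [Finset.mem_range] at hii
      rw [hi (i + 1) (by omega) (by omega)]
    rw [hsum] at r2
    exact mul_left_cancel₀ h0 (by linarith)
  -- pigeonhole on states
  have hstate : ∃ a b : ℕ, a < b ∧ ∀ i, i < d → FF (N + a + i) = FF (N + b + i) := by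
    obtain ⟨a, b, hab, hg⟩ := Finite.exists_ne_map_eq_of_infinite
      (fun m => fun i : Fin d => decide (FF (N + m + i) = 1))
    have key : ∀ a b : ℕ, (fun i : Fin d => decide (FF (N + a + i) = 1)) =
        (fun i : Fin d => decide (FF (N + b + i) = 1)) →
        ∀ i, i < d → FF (N + a + i) = FF (N + b + i) := by
      intro a b h i hi
      have h2 := congrFun h ⟨i, hi⟩
      simp only [decide_eq_decide] at h2
      rcases FF_val (n := N + a + i) (by omega) with v1 | v1 <;>
        rcases FF_val (n := N + b + i) (by omega) with v2 | v2 <;> omega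
    rcases lt_or_gt_of_ne hab with h | h
    · exact ⟨a, b, h, key a b hg⟩
    · exact ⟨b, a, h, key b a hg.symm⟩
  obtain ⟨a, b, hab, hst⟩ := hstate
  set T := b - a with hT
  have hTpos : 0 < T := by omega
  have hper : ∀ n, N + a ≤ n → FF (n + T) = FF n := by
    intro n
    induction n using Nat.strong_induction_on with
    | _ n ihn =>
      intro hn
      by_cases hcase : n < N + a + d
      · have hi : n - (N + a) < d := by omega
        have h1 := hst (n - (N + a)) hi
        have e1 : N + a + (n - (N + a)) = n := by omega
        have e2 : N + b + (n - (N + a)) = n + T := by omega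
        rw [e1, e2] at h1
        exact h1.symm
      · push_neg at hcase
        apply hdet n (n + T) (by omega) (by omega)
        intro i h1i hid
        have e : n + T - i = (n - i) + T := by omega
        rw [e]
        exact ihn (n - i) (by omega) (by omega)
  exact periodic_absurd T (N + a) hTpos (by omega) (fun n hn => hper n hn)
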